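/- For every index 1 ≤ i ≤ ℓ, the difference operators E_i(u) and E_i(v) satisfy the Yangian same-node raising relation: (u − v)·(E_i(u)∘E_i(v) − E_i(v)∘E_i(u)) = −iħ·d_i·(E_i(u) − E_i(v))∘(E_i(u) − E_i(v)), as an identity of ℂ(u,v)-linear endomorphisms of F. -/

import Mathlib

open MvPolynomial Complex Finset

noncomputable section

/-- Variables: the spectral variables (indexed by `Fin 2`) and the `γ_{i,k}`. -/
abbrev Var (ℓ : ℕ) (m : Fin ℓ → ℕ) := Fin 2 ⊕ ((i : Fin ℓ) × Fin (m i))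

/-- The field of rational functions over `ℂ` in the spectral variables and the `γ_{i,k}`. -/
abbrev FF (ℓ : ℕ) (m : Fin ℓ → ℕ) := FractionRing (MvPolynomial (Var ℓ m) ℂ)

variable (ℓ : ℕ) (m : Fin ℓ → ℕ)

/-- The embedding of constants `ℂ → F`. -/
def cstHom : ℂ →+* FF ℓ m :=
  (algebraMap (MvPolynomial (Var ℓ m) ℂ) (FF ℓ m)).comp (C : ℂ →+* MvPolynomial (Var ℓ m) ℂ)

def cst (c : ℂ) : FF ℓ m := cstHom ℓ m c

/-- The variable `γ_{i,k}` as an element of `F`. -/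
def gam (i : Fin ℓ) (k : Fin (m i)) : FF ℓ m :=
  algebraMap (MvPolynomial (Var ℓ m) ℂ) (FF ℓ m) (X (Sum.inr ⟨i, k⟩))

/-- The spectral variables. -/
def spec (t : Fin 2) : FF ℓ m :=
  algebraMap (MvPolynomial (Var ℓ m) ℂ) (FF ℓ m) (X (Sum.inl t))

/-- The algebra automorphism of the polynomial ring shifting the variable `w` by `c`
and fixing all other variables. -/
def shiftPoly (c : ℂ) (w : Var ℓ m) :
    MvPolynomial (Var ℓ m) ℂ ≃ₐ[ℂ] MvPolynomial (Var ℓ m) ℂ :=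
  AlgEquiv.ofAlgHom
    (aeval (fun j => if j = w then X j + MvPolynomial.C c else X j))
    (aeval (fun j => if j = w then X j - MvPolynomial.C c else X j))
    (by apply MvPolynomial.algHom_ext; intro j; by_cases h : j = w <;> simp [h])
    (by apply MvPolynomial.algHom_ext; intro j; by_cases h : j = w <;> simp [h])

/-- The induced automorphism of the field of rational functions. -/
def shiftField (c : ℂ) (w : Var ℓ m) : FF ℓ m ≃+* FF ℓ m :=
  IsFractionRing.ringEquivOfRingEquiv (shiftPoly ℓ m c w).toRingEquiv

variable (a : Fin ℓ → Fin ℓ → ℤ) (d : Fin ℓ → ℕ) (hb : ℂ)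

/-- `β_{i,k}` : the automorphism `γ_{i,k} ↦ γ_{i,k} + iħ·d_i`. -/
def beta (i : Fin ℓ) (k : Fin (m i)) : FF ℓ m ≃+* FF ℓ m :=
  shiftField ℓ m (I * hb * (d i : ℂ)) (Sum.inr ⟨i, k⟩)

/-- The constant `(iħ/2)·(d_i·a_{ij} + 2r·d_j)`, where `r` is offset by one
(so that `r` ranges over `0, …, −a_{ji} − 1` in `Finset.range`). -/
def cf (i j : Fin ℓ) (r : ℕ) : ℂ :=
  (I * hb / 2) * ((d i : ℂ) * (a i j : ℂ) + 2 * ((r : ℂ) + 1) * (d j : ℂ))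

/-- The operator `E_i(w)`. -/
def Eop (i : Fin ℓ) (w : FF ℓ m) : FF ℓ m → FF ℓ m := fun f =>
  cst ℓ m ((d i : ℂ) ^ (-(1/2 : ℂ))) *
    ∑ k : Fin (m i),
      ((∏ j ∈ univ.filter (fun j => i < j), ∏ r ∈ range (-(a j i)).toNat, ∏ p : Fin (m j),
          (gam ℓ m i k - gam ℓ m j p - cst ℓ m (cf ℓ a d hb i j r))) /
        ((w - gam ℓ m i k) * ∏ p ∈ univ.erase k, (gam ℓ m i k - gam ℓ m i p))) *
      (beta ℓ m d hb i k).symm f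

-- ===== auxiliary development =====
namespace Yaux

variable {ℓ : ℕ} {m : Fin ℓ → ℕ}

lemma am_inj : Function.Injective (algebraMap (MvPolynomial (Var ℓ m) ℂ) (FF ℓ m)) :=
  IsFractionRing.injective _ _

lemma shiftPoly_symm_X (c : ℂ) (w j : Var ℓ m) :
    (shiftPoly ℓ m c w).symm (X j) = if j = w then X j - C c else X j := by
  rw [shiftPoly, AlgEquiv.ofAlgHom_symm]
  simp

lemma shiftPoly_symm_C (c : ℂ) (w : Var ℓ m) (z : ℂ) :
    (shiftPoly ℓ m c w).symm (C z) = C z := by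
  have := ((shiftPoly ℓ m c w).symm).commutes z
  simpa [MvPolynomial.algebraMap_eq] using this

lemma shiftField_symm_algebraMap (c : ℂ) (w : Var ℓ m) (p : MvPolynomial (Var ℓ m) ℂ) :
    (shiftField ℓ m c w).symm (algebraMap _ (FF ℓ m) p)
      = algebraMap _ (FF ℓ m) ((shiftPoly ℓ m c w).symm p) := by
  rw [shiftField, IsFractionRing.ringEquivOfRingEquiv_symm,
    IsFractionRing.ringEquivOfRingEquiv_algebraMap]
  rfl

lemma shiftPoly_symm_comm (c c' : ℂ) (w w' : Var ℓ m) (p : MvPolynomial (Var ℓ m) ℂ) :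
    (shiftPoly ℓ m c w).symm ((shiftPoly ℓ m c' w').symm p)
      = (shiftPoly ℓ m c' w').symm ((shiftPoly ℓ m c w).symm p) := by
  have h : ((shiftPoly ℓ m c w).symm.toAlgHom.comp (shiftPoly ℓ m c' w').symm.toAlgHom)
      = ((shiftPoly ℓ m c' w').symm.toAlgHom.comp (shiftPoly ℓ m c w).symm.toAlgHom) := by
    apply MvPolynomial.algHom_ext; intro j
    by_cases h1 : j = w'
    · subst h1
      by_cases h2 : j = w
      · subst h2
        simp [shiftPoly_symm_X, shiftPoly_symm_C, map_sub]
        ring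
      · simp [shiftPoly_symm_X, shiftPoly_symm_C, map_sub, h2]
    · by_cases h2 : j = w
      · subst h2
        simp [shiftPoly_symm_X, shiftPoly_symm_C, map_sub, h1]
      · simp [shiftPoly_symm_X, h1, h2]
  exact AlgHom.congr_fun h p

variable {a : Fin ℓ → Fin ℓ → ℤ} {d : Fin ℓ → ℕ} {hb : ℂ} {i : Fin ℓ}

/-- abbreviation for the inverse beta. -/
def bS (a : Fin ℓ → Fin ℓ → ℤ) (d : Fin ℓ → ℕ) (hb : ℂ) (i : Fin ℓ) (k : Fin (m i)) :
    FF ℓ m ≃+* FF ℓ m := (beta ℓ m d hb i k).symm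

lemma bS_algebraMap (k : Fin (m i)) (p : MvPolynomial (Var ℓ m) ℂ) :
    bS a d hb i k (algebraMap _ (FF ℓ m) p)
      = algebraMap _ (FF ℓ m) ((shiftPoly ℓ m (I * hb * (d i : ℂ)) (Sum.inr ⟨i, k⟩)).symm p) :=
  shiftField_symm_algebraMap _ _ p

lemma bS_comm (k l : Fin (m i)) (f : FF ℓ m) :
    bS a d hb i k (bS a d hb i l f) = bS a d hb i l (bS a d hb i k f) := by
  have h : ((bS a d hb i k).toRingHom.comp (bS (m := m) a d hb i l).toRingHom)
      = ((bS a d hb i l).toRingHom.comp (bS a d hb i k).toRingHom) := by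
    apply IsLocalization.ringHom_ext (nonZeroDivisors (MvPolynomial (Var ℓ m) ℂ))
    apply RingHom.ext
    intro p
    simp only [RingHom.comp_apply, RingEquiv.toRingHom_eq_coe, RingEquiv.coe_toRingHom]
    rw [bS_algebraMap, bS_algebraMap, bS_algebraMap, bS_algebraMap, shiftPoly_symm_comm]
  exact RingHom.congr_fun h f

lemma bS_cst (k : Fin (m i)) (z : ℂ) : bS a d hb i k (cst ℓ m z) = cst ℓ m z := by
  rw [cst, cstHom, RingHom.comp_apply, bS_algebraMap, shiftPoly_symm_C]

lemma bS_spec (k : Fin (m i)) (t : Fin 2) : bS a d hb i k (spec ℓ m t) = spec ℓ m t := by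
  rw [spec, bS_algebraMap, shiftPoly_symm_X, if_neg (by simp)]

lemma bS_gam_ne (k : Fin (m i)) {j : Fin ℓ} {p : Fin (m j)}
    (h : (Sum.inr ⟨j, p⟩ : Var ℓ m) ≠ Sum.inr ⟨i, k⟩) :
    bS a d hb i k (gam ℓ m j p) = gam ℓ m j p := by
  rw [gam, bS_algebraMap, shiftPoly_symm_X, if_neg h]

lemma bS_gam_self (k : Fin (m i)) :
    bS a d hb i k (gam ℓ m i k) = gam ℓ m i k - cst ℓ m (I * hb * (d i : ℂ)) := by
  rw [gam, bS_algebraMap, shiftPoly_symm_X, if_pos rfl,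
    map_sub (algebraMap (MvPolynomial (Var ℓ m) ℂ) (FF ℓ m)), cst, cstHom]
  rfl

lemma bS_ne_zero (k : Fin (m i)) {x : FF ℓ m} (hx : x ≠ 0) : bS a d hb i k x ≠ 0 := by
  intro h
  exact hx (by simpa using congrArg (bS a d hb i k).symm h)

lemma X_sub_X_ne {w w' : Var ℓ m} (h : w ≠ w') :
    (algebraMap (MvPolynomial (Var ℓ m) ℂ) (FF ℓ m)) (X w) -
      (algebraMap (MvPolynomial (Var ℓ m) ℂ) (FF ℓ m)) (X w') ≠ 0 := by
  rw [← map_sub]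
  exact (map_ne_zero_iff _ am_inj).mpr (sub_ne_zero.mpr (fun hx => h (X_injective hx)))

lemma spec_sub_gam_ne (t : Fin 2) (j : Fin ℓ) (p : Fin (m j)) :
    spec ℓ m t - gam ℓ m j p ≠ 0 := X_sub_X_ne (by simp)

lemma gam_sub_gam_ne {j j' : Fin ℓ} {p : Fin (m j)} {p' : Fin (m j')}
    (h : (⟨j, p⟩ : (i : Fin ℓ) × Fin (m i)) ≠ ⟨j', p'⟩) :
    gam ℓ m j p - gam ℓ m j' p' ≠ 0 := X_sub_X_ne (by simpa using h)

end Yaux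

namespace Yaux

variable {ℓ : ℕ} {m : Fin ℓ → ℕ}

/-- pure diagonal core identity -/
lemma diag_core {F : Type*} [Field F] (u v x c : F) (h1 : u - x ≠ 0) (h2 : v - x ≠ 0)
    (h3 : u - (x - c) ≠ 0) (h4 : v - (x - c) ≠ 0) :
    (u - v) * ((u-x)⁻¹ * ((v-(x-c))⁻¹) - (v-x)⁻¹ * ((u-(x-c))⁻¹))
      = -c * (((u-x)⁻¹ - (v-x)⁻¹) * ((u-(x-c))⁻¹ - (v-(x-c))⁻¹)) := by
  field_simp
  ring

set_option maxHeartbeats 1600000 in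
/-- pure off-diagonal core identity -/
lemma offdiag_core {F : Type*} [Field F] (u v x y c : F)
    (hux : u-x ≠ 0) (hvx : v-x ≠ 0) (huy : u-y ≠ 0) (hvy : v-y ≠ 0)
    (hxy : x - y ≠ 0) (hyx : y - x ≠ 0) (h1 : y - (x - c) ≠ 0) (h2 : x - (y - c) ≠ 0) :
    (u-v) * ( (u-x)⁻¹*(x-y)⁻¹ * ((v-y)⁻¹*(y-(x-c))⁻¹)
            - (v-x)⁻¹*(x-y)⁻¹ * ((u-y)⁻¹*(y-(x-c))⁻¹)
            + (u-y)⁻¹*(y-x)⁻¹ * ((v-x)⁻¹*(x-(y-c))⁻¹)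
            - (v-y)⁻¹*(y-x)⁻¹ * ((u-x)⁻¹*(x-(y-c))⁻¹) )
      = -c * ( ((u-x)⁻¹*(x-y)⁻¹ - (v-x)⁻¹*(x-y)⁻¹) * ((u-y)⁻¹*(y-(x-c))⁻¹ - (v-y)⁻¹*(y-(x-c))⁻¹)
             + ((u-y)⁻¹*(y-x)⁻¹ - (v-y)⁻¹*(y-x)⁻¹) * ((u-x)⁻¹*(x-(y-c))⁻¹ - (v-x)⁻¹*(x-(y-c))⁻¹) ) := by
  have W1 : (u-x)⁻¹*(v-y)⁻¹ - (v-x)⁻¹*(u-y)⁻¹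
      = (v-u)*(x-y)*((u-x)⁻¹*(v-x)⁻¹*(u-y)⁻¹*(v-y)⁻¹) := by
    field_simp
    ring
  have W3 : (y-(x-c))⁻¹ + (x-(y-c))⁻¹ = 2*c*((y-(x-c))⁻¹*(x-(y-c))⁻¹) := by
    field_simp
    ring
  have W4 : (u-x)⁻¹ - (v-x)⁻¹ = (v-u)*((u-x)⁻¹*(v-x)⁻¹) := by
    field_simp
    ring
  have W5 : (u-y)⁻¹ - (v-y)⁻¹ = (v-u)*((u-y)⁻¹*(v-y)⁻¹) := by
    field_simp
    ring
  have W6 : (x-y)*(x-y)⁻¹ = 1 := mul_inv_cancel₀ hxy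
  have W8 : (x-y)*(y-x)⁻¹ = -1 := by
    rw [show x-y = -(y-x) from by ring, neg_mul, mul_inv_cancel₀ hyx]
  have W9 : (x-y)⁻¹*(y-(x-c))⁻¹ + (y-x)⁻¹*(x-(y-c))⁻¹
      = 2*((y-(x-c))⁻¹*(x-(y-c))⁻¹) := by
    field_simp
    ring
  set a1 := (u-x)⁻¹
  set a2 := (v-x)⁻¹
  set b1 := (u-y)⁻¹
  set b2 := (v-y)⁻¹
  set t := (x-y)⁻¹
  set s' := (y-x)⁻¹
  set p := (y-(x-c))⁻¹
  set q := (x-(y-c))⁻¹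
  set A := a1*a2*b1*b2 with hA
  have s1 : (u-v) * ( a1*t * (b2*p) - a2*t * (b1*p) + b1*s' * (a2*q) - b2*s' * (a1*q) )
      = -((u-v)^2) * A * ((x-y) * (t*p - s'*q)) := by
    linear_combination ((u-v)*(t*p - s'*q)) * W1
  have s2 : (x-y)*(t*p - s'*q) = p + q := by
    linear_combination p * W6 + (-q) * W8
  have s4 : -c * ( (a1*t - a2*t)*(b1*p - b2*p) + (b1*s' - b2*s')*(a1*q - a2*q) )
      = -c * ((u-v)^2) * A * (t*p + s'*q) := by
    linear_combination (-c*(t*p+s'*q)*(b1-b2)) * W4 + (-c*(v-u)*(a1*a2)*(t*p+s'*q)) * W5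
  linear_combination s1 - s4 + (-((u-v)^2)*A) * s2 + (-((u-v)^2)*A) * W3
    + (c*((u-v)^2)*A) * W9

lemma sigma_ne (i : Fin ℓ) {k l : Fin (m i)} (h : k ≠ l) :
    (⟨i, k⟩ : (j : Fin ℓ) × Fin (m j)) ≠ ⟨i, l⟩ := by
  intro hh
  injection hh with h1 h2
  exact h h2

lemma inr_ne (i : Fin ℓ) {k l : Fin (m i)} (h : k ≠ l) :
    (Sum.inr ⟨i, k⟩ : Var ℓ m) ≠ Sum.inr ⟨i, l⟩ := by
  simpa using sigma_ne i h

lemma inr_ne' {i j : Fin ℓ} (h : j ≠ i) {p : Fin (m j)} {k : Fin (m i)} :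
    (Sum.inr ⟨j, p⟩ : Var ℓ m) ≠ Sum.inr ⟨i, k⟩ := by
  intro hh
  injection hh with h'
  injection h' with h1 h2
  exact h h1

def Ak (a : Fin ℓ → Fin ℓ → ℤ) (d : Fin ℓ → ℕ) (hb : ℂ) (i : Fin ℓ) (k : Fin (m i)) : FF ℓ m :=
  ∏ j ∈ univ.filter (fun j => i < j), ∏ r ∈ range (-(a j i)).toNat, ∏ p : Fin (m j),
    (gam ℓ m i k - gam ℓ m j p - cst ℓ m (cf ℓ a d hb i j r))

def Bf (i : Fin ℓ) (k : Fin (m i)) : FF ℓ m :=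
  ∏ p ∈ univ.erase k, (gam ℓ m i k - gam ℓ m i p)

def Br (i : Fin ℓ) (k l : Fin (m i)) : FF ℓ m :=
  ∏ p ∈ (univ.erase k).erase l, (gam ℓ m i k - gam ℓ m i p)

def co (a : Fin ℓ → Fin ℓ → ℤ) (d : Fin ℓ → ℕ) (hb : ℂ) (i : Fin ℓ) (w : FF ℓ m)
    (k : Fin (m i)) : FF ℓ m :=
  Ak a d hb i k / ((w - gam ℓ m i k) * Bf i k)

variable {a : Fin ℓ → Fin ℓ → ℤ} {d : Fin ℓ → ℕ} {hb : ℂ} {i : Fin ℓ}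

lemma Eop_eq (w : FF ℓ m) (f : FF ℓ m) :
    Eop ℓ m a d hb i w f
      = cst ℓ m ((d i : ℂ) ^ (-(1/2 : ℂ))) * ∑ k, co a d hb i w k * bS a d hb i k f := rfl

lemma Bf_split (i : Fin ℓ) (k l : Fin (m i)) (h : l ≠ k) :
    Bf i k = (gam ℓ m i k - gam ℓ m i l) * Br i k l :=
  (Finset.mul_prod_erase (univ.erase k) _ (mem_erase.mpr ⟨h, mem_univ l⟩)).symm

lemma Bf_ne (k : Fin (m i)) : Bf (m := m) i k ≠ 0 :=
  prod_ne_zero_iff.mpr fun p hp => gam_sub_gam_ne (sigma_ne i (Ne.symm (mem_erase.mp hp).1))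

lemma bS_Ak_ne (k l : Fin (m i)) (h : k ≠ l) :
    bS a d hb i k (Ak a d hb i l) = Ak a d hb i l := by
  rw [Ak, map_prod]
  refine prod_congr rfl fun j hj => ?_
  rw [map_prod]
  refine prod_congr rfl fun r _ => ?_
  rw [map_prod]
  refine prod_congr rfl fun p _ => ?_
  rw [map_sub, map_sub, bS_cst, bS_gam_ne _ (inr_ne i (Ne.symm h)),
    bS_gam_ne _ (inr_ne' (ne_of_gt (mem_filter.mp hj).2))]

lemma bS_Br (k l : Fin (m i)) (h : l ≠ k) :
    bS a d hb i k (Br i l k) = Br i l k := by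
  rw [Br, map_prod]
  refine prod_congr rfl fun p hp => ?_
  rw [map_sub, bS_gam_ne _ (inr_ne i h), bS_gam_ne _ (inr_ne i (mem_erase.mp hp).1)]

lemma bS_co_self (k : Fin (m i)) (t : Fin 2) :
    bS a d hb i k (co a d hb i (spec ℓ m t) k)
      = bS a d hb i k (Ak a d hb i k) /
          ((spec ℓ m t - (gam ℓ m i k - cst ℓ m (I * hb * (d i : ℂ)))) *
            bS a d hb i k (Bf i k)) := by
  rw [co, map_div₀, map_mul, map_sub, bS_spec, bS_gam_self]

lemma bS_co_ne (k l : Fin (m i)) (h : k ≠ l) (t : Fin 2) :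
    bS a d hb i k (co a d hb i (spec ℓ m t) l)
      = Ak a d hb i l /
          ((spec ℓ m t - gam ℓ m i l) *
            ((gam ℓ m i l - (gam ℓ m i k - cst ℓ m (I * hb * (d i : ℂ)))) * Br i l k)) := by
  rw [co, Bf_split i l k h, map_div₀, map_mul, map_mul, map_sub, map_sub, bS_spec,
    bS_Ak_ne _ _ h, bS_gam_ne _ (inr_ne i (Ne.symm h)),
    bS_gam_self, bS_Br _ _ (Ne.symm h)]

def Tm (a : Fin ℓ → Fin ℓ → ℤ) (d : Fin ℓ → ℕ) (hb : ℂ) (i : Fin ℓ) (f : FF ℓ m)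
    (t t' : Fin 2) (k l : Fin (m i)) : FF ℓ m :=
  co a d hb i (spec ℓ m t) k *
    (bS a d hb i k (co a d hb i (spec ℓ m t') l) * bS a d hb i k (bS a d hb i l f))

def SS (a : Fin ℓ → Fin ℓ → ℤ) (d : Fin ℓ → ℕ) (hb : ℂ) (i : Fin ℓ) (f : FF ℓ m)
    (t t' : Fin 2) : FF ℓ m :=
  ∑ k, ∑ l, Tm a d hb i f t t' k l

lemma Eop_Eop (t t' : Fin 2) (f : FF ℓ m) :
    Eop ℓ m a d hb i (spec ℓ m t) (Eop ℓ m a d hb i (spec ℓ m t') f)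
      = cst ℓ m ((d i : ℂ) ^ (-(1/2 : ℂ))) ^ 2 * SS a d hb i f t t' := by
  have hk : ∀ k, bS a d hb i k (Eop ℓ m a d hb i (spec ℓ m t') f)
      = cst ℓ m ((d i : ℂ) ^ (-(1/2 : ℂ))) *
          ∑ l, bS a d hb i k (co a d hb i (spec ℓ m t') l) * bS a d hb i k (bS a d hb i l f) := by
    intro k
    rw [Eop_eq, map_mul, bS_cst, map_sum]
    congr 1
    exact sum_congr rfl fun l _ => map_mul _ _ _
  rw [Eop_eq]
  simp only [hk]
  simp only [SS, Tm, Finset.mul_sum]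
  exact sum_congr rfl fun k _ => sum_congr rfl fun l _ => by ring

lemma Eop_sub (w f g : FF ℓ m) :
    Eop ℓ m a d hb i w (f - g) = Eop ℓ m a d hb i w f - Eop ℓ m a d hb i w g := by
  rw [Eop_eq, Eop_eq, Eop_eq, ← mul_sub, ← Finset.sum_sub_distrib]
  congr 1
  exact sum_congr rfl fun k _ => by rw [map_sub, mul_sub]

end Yaux

namespace Yaux

variable {ℓ : ℕ} {m : Fin ℓ → ℕ} {a : Fin ℓ → Fin ℓ → ℤ} {d : Fin ℓ → ℕ} {hb : ℂ} {i : Fin ℓ}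

lemma two_ne_zero' : (2 : FF ℓ m) ≠ 0 := fun h => by
  have h2 : algebraMap (MvPolynomial (Var ℓ m) ℂ) (FF ℓ m) 2
      = algebraMap (MvPolynomial (Var ℓ m) ℂ) (FF ℓ m) 0 := by
    rw [map_ofNat, map_zero]
    exact h
  have h3 : (2 : MvPolynomial (Var ℓ m) ℂ) = 0 := am_inj h2
  have h4 : ((C : ℂ →+* MvPolynomial (Var ℓ m) ℂ) 2) = C 0 := by
    rw [map_ofNat, map_zero]
    exact_mod_cast h3
  have := MvPolynomial.C_injective (Var ℓ m) ℂ h4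
  norm_num at this

set_option synthInstance.maxHeartbeats 1000000 in
set_option maxHeartbeats 3200000 in
lemma key (f : FF ℓ m) :
    (spec ℓ m 0 - spec ℓ m 1) * (SS a d hb i f 0 1 - SS a d hb i f 1 0)
      = (- cst ℓ m (I * hb * (d i : ℂ))) *
          (SS a d hb i f 0 0 - SS a d hb i f 0 1 - (SS a d hb i f 1 0 - SS a d hb i f 1 1)) := by
  have hpair : ∀ k l : Fin (m i),
      (spec ℓ m 0 - spec ℓ m 1) * (Tm a d hb i f 0 1 k l - Tm a d hb i f 1 0 k l)
        + (spec ℓ m 0 - spec ℓ m 1) * (Tm a d hb i f 0 1 l k - Tm a d hb i f 1 0 l k)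
      = (- cst ℓ m (I * hb * (d i : ℂ))) *
          (Tm a d hb i f 0 0 k l - Tm a d hb i f 0 1 k l
            - (Tm a d hb i f 1 0 k l - Tm a d hb i f 1 1 k l))
        + (- cst ℓ m (I * hb * (d i : ℂ))) *
          (Tm a d hb i f 0 0 l k - Tm a d hb i f 0 1 l k
            - (Tm a d hb i f 1 0 l k - Tm a d hb i f 1 1 l k)) := by
    intro k l
    rcases eq_or_ne k l with rfl | hkl
    · -- diagonal case
      have h1 := spec_sub_gam_ne (m := m) 0 i k
      have h2 := spec_sub_gam_ne (m := m) 1 i k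
      have h3 : spec ℓ m 0 - (gam ℓ m i k - cst ℓ m (I * hb * (d i : ℂ))) ≠ 0 := by
        have := bS_ne_zero (a := a) (d := d) (hb := hb) k (spec_sub_gam_ne (m := m) 0 i k)
        rwa [map_sub, bS_spec, bS_gam_self] at this
      have h4 : spec ℓ m 1 - (gam ℓ m i k - cst ℓ m (I * hb * (d i : ℂ))) ≠ 0 := by
        have := bS_ne_zero (a := a) (d := d) (hb := hb) k (spec_sub_gam_ne (m := m) 1 i k)
        rwa [map_sub, bS_spec, bS_gam_self] at this
      have core := diag_core (spec ℓ m 0) (spec ℓ m 1) (gam ℓ m i k)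
        (cst ℓ m (I * hb * (d i : ℂ))) h1 h2 h3 h4
      simp only [Tm]
      simp only [bS_co_self]
      simp only [co]
      simp only [div_eq_mul_inv, mul_inv]
      linear_combination (2 * Ak a d hb i k * bS a d hb i k (Ak a d hb i k) *
        bS a d hb i k (bS a d hb i k f) * (Bf i k)⁻¹ * (bS a d hb i k (Bf i k))⁻¹) * core
    · -- off-diagonal case
      have hux := spec_sub_gam_ne (m := m) 0 i k
      have hvx := spec_sub_gam_ne (m := m) 1 i k
      have huy := spec_sub_gam_ne (m := m) 0 i l
      have hvy := spec_sub_gam_ne (m := m) 1 i l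
      have hxy := gam_sub_gam_ne (m := m) (sigma_ne i hkl)
      have hyx := gam_sub_gam_ne (m := m) (sigma_ne i (Ne.symm hkl))
      have h1 : gam ℓ m i l - (gam ℓ m i k - cst ℓ m (I * hb * (d i : ℂ))) ≠ 0 := by
        have := bS_ne_zero (a := a) (d := d) (hb := hb) k
          (gam_sub_gam_ne (m := m) (sigma_ne i (Ne.symm hkl)))
        rwa [map_sub, bS_gam_ne _ (inr_ne i (Ne.symm hkl)), bS_gam_self] at this
      have h2 : gam ℓ m i k - (gam ℓ m i l - cst ℓ m (I * hb * (d i : ℂ))) ≠ 0 := by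
        have := bS_ne_zero (a := a) (d := d) (hb := hb) l
          (gam_sub_gam_ne (m := m) (sigma_ne i hkl))
        rwa [map_sub, bS_gam_ne _ (inr_ne i hkl), bS_gam_self] at this
      have core := offdiag_core (spec ℓ m 0) (spec ℓ m 1) (gam ℓ m i k) (gam ℓ m i l)
        (cst ℓ m (I * hb * (d i : ℂ))) hux hvx huy hvy hxy hyx h1 h2
      have e1 : ∀ t : Fin 2, co a d hb i (spec ℓ m t) k
          = Ak a d hb i k / ((spec ℓ m t - gam ℓ m i k) *
              ((gam ℓ m i k - gam ℓ m i l) * Br i k l)) := fun t => by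
        rw [co, Bf_split i k l (Ne.symm hkl)]
      have e2 : ∀ t : Fin 2, co a d hb i (spec ℓ m t) l
          = Ak a d hb i l / ((spec ℓ m t - gam ℓ m i l) *
              ((gam ℓ m i l - gam ℓ m i k) * Br i l k)) := fun t => by
        rw [co, Bf_split i l k hkl]
      have e3 := bS_co_ne (a := a) (d := d) (hb := hb) k l hkl
      have e4 := bS_co_ne (a := a) (d := d) (hb := hb) l k (Ne.symm hkl)
      have e5 : bS a d hb i l (bS a d hb i k f) = bS a d hb i k (bS a d hb i l f) :=
        bS_comm l k f
      simp only [Tm]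
      simp only [e3, e4, e5]
      simp only [e1, e2]
      simp only [div_eq_mul_inv, mul_inv]
      linear_combination (Ak a d hb i k * Ak a d hb i l * bS a d hb i k (bS a d hb i l f) *
        (Br i k l)⁻¹ * (Br i l k)⁻¹) * core
  -- symmetrization
  have mulsum2 : ∀ (z : FF ℓ m) (g h : Fin (m i) → Fin (m i) → FF ℓ m),
      z * ((∑ k, ∑ l, g k l) - (∑ k, ∑ l, h k l)) = ∑ k, ∑ l, z * (g k l - h k l) := by
    intro z g h
    rw [← Finset.sum_sub_distrib, Finset.mul_sum]
    refine sum_congr rfl fun k _ => ?_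
    rw [← Finset.sum_sub_distrib, Finset.mul_sum]
  have mulsum4 : ∀ (z : FF ℓ m) (g1 g2 g3 g4 : Fin (m i) → Fin (m i) → FF ℓ m),
      z * ((∑ k, ∑ l, g1 k l) - (∑ k, ∑ l, g2 k l) -
          ((∑ k, ∑ l, g3 k l) - (∑ k, ∑ l, g4 k l)))
        = ∑ k, ∑ l, z * (g1 k l - g2 k l - (g3 k l - g4 k l)) := by
    intro z g1 g2 g3 g4
    simp only [← Finset.sum_sub_distrib, Finset.mul_sum]
  have hswap : ∀ g : Fin (m i) → Fin (m i) → FF ℓ m,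
      (∑ k, ∑ l, g l k) = ∑ k, ∑ l, g k l := fun g => Finset.sum_comm
  have hsum := sum_congr rfl fun (k : Fin (m i)) (_ : k ∈ univ) =>
    sum_congr rfl fun (l : Fin (m i)) (_ : l ∈ univ) => hpair k l
  simp only [Finset.sum_add_distrib] at hsum
  rw [hswap (fun k l => (spec ℓ m 0 - spec ℓ m 1) * (Tm a d hb i f 0 1 k l - Tm a d hb i f 1 0 k l)),
    hswap (fun k l => (- cst ℓ m (I * hb * (d i : ℂ))) *
      (Tm a d hb i f 0 0 k l - Tm a d hb i f 0 1 k l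
        - (Tm a d hb i f 1 0 k l - Tm a d hb i f 1 1 k l)))] at hsum
  have eL : (spec ℓ m 0 - spec ℓ m 1) * (SS a d hb i f 0 1 - SS a d hb i f 1 0)
      = ∑ k, ∑ l, (spec ℓ m 0 - spec ℓ m 1) *
          (Tm a d hb i f 0 1 k l - Tm a d hb i f 1 0 k l) := by
    simp only [SS]
    exact mulsum2 _ _ _
  have eR : (- cst ℓ m (I * hb * (d i : ℂ))) *
        (SS a d hb i f 0 0 - SS a d hb i f 0 1 - (SS a d hb i f 1 0 - SS a d hb i f 1 1))
      = ∑ k, ∑ l, (- cst ℓ m (I * hb * (d i : ℂ))) *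
          (Tm a d hb i f 0 0 k l - Tm a d hb i f 0 1 k l
            - (Tm a d hb i f 1 0 k l - Tm a d hb i f 1 1 k l)) := by
    simp only [SS]
    exact mulsum4 _ _ _ _ _
  rw [eL, eR]
  apply mul_left_cancel₀ (two_ne_zero' (ℓ := ℓ) (m := m))
  rw [two_mul, two_mul]
  exact hsum

end Yaux

open Yaux in
set_option synthInstance.maxHeartbeats 1000000 in
set_option maxHeartbeats 1600000 in
/-- the Yangian same-node raising relation. -/
theorem yangian_EE_same
    (ℓ : ℕ) (hl : 1 ≤ ℓ)
    (a : Fin ℓ → Fin ℓ → ℤ) (ha : ∀ i, a i i = 2) (ha' : ∀ i j, i ≠ j → a i j ≤ 0)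
    (d : Fin ℓ → ℕ) (hd : ∀ i, 0 < d i)
    (hsym : ∀ i j, (d i : ℤ) * a i j = (d j : ℤ) * a j i)
    (hb : ℂ) (m : Fin ℓ → ℕ) (hm : ∀ i, 0 < m i)
    (i : Fin ℓ) :
    (spec ℓ m 0 - spec ℓ m 1) •
        (Eop ℓ m a d hb i (spec ℓ m 0) ∘ Eop ℓ m a d hb i (spec ℓ m 1)
          - Eop ℓ m a d hb i (spec ℓ m 1) ∘ Eop ℓ m a d hb i (spec ℓ m 0))
      = cst ℓ m (-(I * hb) * (d i : ℂ)) •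
        ((Eop ℓ m a d hb i (spec ℓ m 0) - Eop ℓ m a d hb i (spec ℓ m 1)) ∘
          (Eop ℓ m a d hb i (spec ℓ m 0) - Eop ℓ m a d hb i (spec ℓ m 1))) := by
  funext f
  simp only [Pi.smul_apply, Pi.sub_apply, Function.comp_apply, smul_eq_mul]
  rw [Eop_sub, Eop_sub]
  rw [Eop_Eop, Eop_Eop, Eop_Eop, Eop_Eop]
  have hcst : cst ℓ m (-(I * hb) * (d i : ℂ)) = - cst ℓ m (I * hb * (d i : ℂ)) := by
    rw [show (-(I * hb) * ((d i : ℕ) : ℂ)) = -(I * hb * ((d i : ℕ) : ℂ)) from by ring, cst, cst,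
      map_neg]
  rw [hcst]
  linear_combination (cst ℓ m ((d i : ℂ) ^ (-(1/2 : ℂ)))) ^ 2 * key (a := a) (d := d) (hb := hb) (i := i) f
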